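/- For every finite field F_q, every integer d ≥ 1, and every ε > 0, there exist n ≥ 1 and a nonzero M_d-matrix M over F_q such that MaxR(M) < ((1 − 1/q)^d + ε) · CR(M). In particular, the constant (1 − 1/q)^d in the inequality E_p[rank M(p)] ≥ (1 − 1/q)^d CR(M) cannot be improved. -/

import Mathlib

open MvPolynomial

section Defs

variable {F : Type*} [Field F]

/-- A polynomial in the block variables `x_{i,j}` (`i ∈ Fin d`, `j ∈ Fin n`) is
multilinear exactly in the blocks of `S`: every monomial has degree 1 in each block
`i ∈ S` and degree 0 in each block `i ∉ S`. -/
def IsMultilinearOn {d n : ℕ} (S : Finset (Fin d))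
    (f : MvPolynomial (Fin d × Fin n) F) : Prop :=
  ∀ m ∈ f.support, ∀ i : Fin d,
    (∑ j : Fin n, m (i, j)) = if i ∈ S then 1 else 0

/-- A multilinear form: degree 1 in every block of variables. -/
def IsMultilinear {d n : ℕ} (f : MvPolynomial (Fin d × Fin n) F) : Prop :=
  IsMultilinearOn Finset.univ f

/-- Commutative rank: the rank of the matrix over the field of fractions of the
polynomial ring. -/
noncomputable def CR {σ : Type*} {α β : Type*} [Fintype β]
    (M : Matrix α β (MvPolynomial σ F)) : ℕ :=
  (M.map (algebraMap (MvPolynomial σ F) (FractionRing (MvPolynomial σ F)))).rank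

/-- `M` is the sum of `r` outer products `u ⊗ v`, where `u` has entries multilinear
in the blocks of some `S ⊆ [d]` and `v` has entries multilinear in the complementary
blocks. -/
def HasPRDecomp {d n a b : ℕ}
    (M : Matrix (Fin a) (Fin b) (MvPolynomial (Fin d × Fin n) F)) (r : ℕ) : Prop :=
  ∃ (S : Fin r → Finset (Fin d))
    (u : Fin r → Fin a → MvPolynomial (Fin d × Fin n) F)
    (v : Fin r → Fin b → MvPolynomial (Fin d × Fin n) F),
    (∀ t i, IsMultilinearOn (S t) (u t i)) ∧
    (∀ t j, IsMultilinearOn (S t)ᶜ (v t j)) ∧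
    M = ∑ t, Matrix.of fun i j => u t i * v t j

/-- Partition rank of a matrix of multilinear forms. -/
noncomputable def PR {d n a b : ℕ}
    (M : Matrix (Fin a) (Fin b) (MvPolynomial (Fin d × Fin n) F)) : ℕ :=
  sInf {r | HasPRDecomp M r}

/-- Evaluation of a matrix of multilinear forms at a point `p ∈ (F^n)^d`. -/
noncomputable def evalMat {d n : ℕ} {α β : Type*}
    (M : Matrix α β (MvPolynomial (Fin d × Fin n) F)) (p : Fin d → Fin n → F) :
    Matrix α β F :=
  M.map (eval fun v => p v.1 v.2)

/-- Max-rank: the largest rank of a scalar evaluation. -/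
noncomputable def MaxR {d n : ℕ} {α β : Type*} [Fintype β]
    (M : Matrix α β (MvPolynomial (Fin d × Fin n) F)) : ℕ :=
  ⨆ p : Fin d → Fin n → F, (evalMat M p).rank

/-- Partial evaluation: substitute `x_i := p_i` for `i ∈ S`, leaving the other
blocks of variables untouched. -/
noncomputable def pevalMat {d n : ℕ} {α β : Type*}
    (M : Matrix α β (MvPolynomial (Fin d × Fin n) F)) (S : Finset (Fin d))
    (p : Fin d → Fin n → F) :
    Matrix α β (MvPolynomial (Fin d × Fin n) F) :=
  M.map (aeval fun v : Fin d × Fin n => if v.1 ∈ S then C (p v.1 v.2) else X v)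

end Defs

section D1

variable {F : Type*} [Field F]

/-- Partition-rank decomposition for matrices of linear forms: a sum of `r` outer
products, each either (scalars) ⊗ (linear forms) or (linear forms) ⊗ (scalars). -/
def HasPR1Decomp {n a b : ℕ}
    (M : Matrix (Fin a) (Fin b) (MvPolynomial (Fin n) F)) (r : ℕ) : Prop :=
  ∃ (c : Fin r → Bool)
    (u : Fin r → Fin a → MvPolynomial (Fin n) F)
    (v : Fin r → Fin b → MvPolynomial (Fin n) F),
    (∀ t i, (u t i).IsHomogeneous (if c t then 0 else 1)) ∧
    (∀ t j, (v t j).IsHomogeneous (if c t then 1 else 0)) ∧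
    M = ∑ t, Matrix.of fun i j => u t i * v t j

/-- Partition rank of a matrix of linear forms. -/
noncomputable def PR1 {n a b : ℕ}
    (M : Matrix (Fin a) (Fin b) (MvPolynomial (Fin n) F)) : ℕ :=
  sInf {r | HasPR1Decomp M r}

/-- Max-rank of a matrix of linear forms. -/
noncomputable def MaxR1 {n a b : ℕ}
    (M : Matrix (Fin a) (Fin b) (MvPolynomial (Fin n) F)) : ℕ :=
  ⨆ p : Fin n → F, (M.map (eval p)).rank

end D1

section Tensor3

variable {F : Type*} [Field F]

/-- Substitute the first two blocks of variables of a trilinear form at `x` and `y`,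
leaving a polynomial in the third block. -/
noncomputable def sub01 {n : ℕ} (T : MvPolynomial (Fin 3 × Fin n) F)
    (x y : Fin n → F) : MvPolynomial (Fin 3 × Fin n) F :=
  aeval (fun v : Fin 3 × Fin n =>
    if v.1 = 0 then C (x v.2) else if v.1 = 1 then C (y v.2) else X v) T

open Classical in
/-- The bias of a 3-tensor: the probability over `(x, y)` that `T(x, y, -)` is the
zero linear form. -/
noncomputable def bias {n : ℕ} [Fintype F] (T : MvPolynomial (Fin 3 × Fin n) F) : ℝ :=
  ((Finset.univ.filter fun p : (Fin n → F) × (Fin n → F) =>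
      sub01 T p.1 p.2 = 0).card : ℝ) /
    ((Fintype.card ((Fin n → F) × (Fin n → F))) : ℝ)

/-- The analytic rank of a 3-tensor. -/
noncomputable def AR {n : ℕ} [Fintype F] (T : MvPolynomial (Fin 3 × Fin n) F) : ℝ :=
  - Real.logb (Fintype.card F) (bias T)

/-- A slice-rank decomposition: `T = ∑ f_t g_t` with `f_t` a linear form in one
block and `g_t` a bilinear form in the other two blocks. -/
def HasSRDecomp {n : ℕ} (T : MvPolynomial (Fin 3 × Fin n) F) (r : ℕ) : Prop :=
  ∃ (c : Fin r → Fin 3) (f g : Fin r → MvPolynomial (Fin 3 × Fin n) F),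
    (∀ t, IsMultilinearOn {c t} (f t)) ∧
    (∀ t, IsMultilinearOn ({c t} : Finset (Fin 3))ᶜ (g t)) ∧
    T = ∑ t, f t * g t

/-- Slice rank of a 3-tensor. -/
noncomputable def SR {n : ℕ} (T : MvPolynomial (Fin 3 × Fin n) F) : ℕ :=
  sInf {r | HasSRDecomp T r}

/-- The matrix `mat T` of a 3-tensor, evaluated at `x` in its first block:
the `(j,k)` entry is `T(x, e_j, e_k)`. -/
noncomputable def matT {n : ℕ} (T : MvPolynomial (Fin 3 × Fin n) F)
    (x : Fin n → F) : Matrix (Fin n) (Fin n) F :=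
  Matrix.of fun j k => eval (fun v : Fin 3 × Fin n =>
    if v.1 = 0 then x v.2
    else if v.1 = 1 then (if v.2 = j then 1 else 0)
    else (if v.2 = k then 1 else 0)) T

end Tensor3

section Mult

variable {F : Type*} [Field F]

/-- `mult(f, p)`: the minimum total degree of a monomial of `f(x + p)`. -/
noncomputable def polyMult {n : ℕ} (f : MvPolynomial (Fin n) F) (p : Fin n → F) : ℕ :=
  sInf {k | ∃ m ∈ (aeval (fun i : Fin n => X i + C (p i)) f :
    MvPolynomial (Fin n) F).support, (∑ i, m i) = k}

end Mult

section Statement12Aux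

open MvPolynomial

variable {F : Type*} [Field F]

/-- The diagonal entry `∏_i ⟨x_i, t_i⟩` used in the tightness construction. -/
noncomputable def auxPoly (d n : ℕ) (t : Fin d → Fin n → F) :
    MvPolynomial (Fin d × Fin n) F :=
  ∏ i : Fin d, ∑ j : Fin n, C (t i j) * X (i, j)

lemma auxPoly_whom (d n : ℕ) (t : Fin d → Fin n → F) (i : Fin d) :
    IsWeightedHomogeneous (fun v : Fin d × Fin n => if v.1 = i then (1:ℕ) else 0)
      (auxPoly d n t) 1 := by
  have h := IsWeightedHomogeneous.prod (R := F) Finset.univ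
    (fun i' : Fin d => ∑ j : Fin n, C (t i' j) * X (i', j))
    (fun i' => if i' = i then (1:ℕ) else 0)
    (w := fun v : Fin d × Fin n => if v.1 = i then (1:ℕ) else 0) ?_
  · simpa [auxPoly, Finset.sum_ite_eq'] using h
  · intro i' _
    apply IsWeightedHomogeneous.sum
    intro j _
    have := (isWeightedHomogeneous_C (R := F)
      (fun v : Fin d × Fin n => if v.1 = i then (1:ℕ) else 0) (t i' j)).mul
      (isWeightedHomogeneous_X F
        (fun v : Fin d × Fin n => if v.1 = i then (1:ℕ) else 0) (i', j))
    simpa using this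

lemma auxPoly_multilinear (d n : ℕ) (t : Fin d → Fin n → F) :
    IsMultilinear (auxPoly d n t) := by
  classical
  intro m hm i
  have h1 : Finsupp.weight (fun v : Fin d × Fin n => if v.1 = i then (1:ℕ) else 0) m = 1 :=
    auxPoly_whom d n t i (by simpa [MvPolynomial.mem_support_iff] using hm)
  rw [Finsupp.weight_apply, Finsupp.sum_fintype _ _ (by simp)] at h1
  simp only [Finset.mem_univ, if_true]
  rw [← h1, Fintype.sum_prod_type]
  simp [Finset.sum_ite_eq']

lemma auxPoly_eval (d n : ℕ) (t : Fin d → Fin n → F) (g : Fin d × Fin n → F) :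
    eval g (auxPoly d n t) = ∏ i, ∑ j, t i j * g (i, j) := by
  simp [auxPoly]

lemma auxPoly_eq_zero (d n : ℕ) (t : Fin d → Fin n → F) (i : Fin d) (hti : t i = 0) :
    auxPoly d n t = 0 :=
  Finset.prod_eq_zero (Finset.mem_univ i) (by simp [hti])

lemma auxPoly_ne_zero (d n : ℕ) (t : Fin d → Fin n → F) (ht : ∀ i, t i ≠ 0) :
    auxPoly d n t ≠ 0 := by
  classical
  have hj : ∀ i, ∃ j, t i j ≠ 0 := fun i => by
    by_contra h; push_neg at h; exact ht i (funext h)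
  choose j0 hj0 using hj
  intro h0
  have he := auxPoly_eval d n t (fun v => if v.2 = j0 v.1 then 1 else 0)
  rw [h0, map_zero] at he
  simp only [mul_ite, mul_one, mul_zero, Finset.sum_ite_eq' Finset.univ,
    Finset.mem_univ, if_true] at he
  exact (Finset.prod_ne_zero_iff.mpr fun i _ => hj0 i) he.symm

noncomputable def dotL (n : ℕ) (p : Fin n → F) : (Fin n → F) →ₗ[F] F where
  toFun := fun s => ∑ j, s j * p j
  map_add' := by intro a b; simp [add_mul, Finset.sum_add_distrib]
  map_smul' := by intro c a; simp [Finset.mul_sum, mul_assoc]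

@[simp] lemma dotL_apply (n : ℕ) (p s : Fin n → F) :
    dotL n p s = ∑ j, s j * p j := rfl

open Classical in
lemma card_dot (n : ℕ) [Fintype F] (hn : 1 ≤ n) (p : Fin n → F) :
    Nat.card {s : Fin n → F // (∑ j, s j * p j) ≠ 0}
      ≤ Fintype.card F ^ n - Fintype.card F ^ (n - 1) := by
  classical
  rw [Nat.card_eq_fintype_card]
  by_cases hp : p = 0
  · have : Fintype.card {s : Fin n → F // (∑ j, s j * p j) ≠ 0} = 0 :=
      Fintype.card_eq_zero_iff.mpr ⟨fun s => s.2 (by simp [hp])⟩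
    exact this ▸ Nat.zero_le _
  · obtain ⟨j0, hj0⟩ : ∃ j0, p j0 ≠ 0 := by
      by_contra h; push_neg at h; exact hp (funext h)
    have hsurj : Function.Surjective (dotL n p) := by
      intro cc
      refine ⟨(cc * (p j0)⁻¹) • (Pi.single j0 1 : Fin n → F), ?_⟩
      simp only [dotL_apply, Pi.smul_apply, Pi.single_apply, smul_eq_mul, mul_ite,
        ite_mul, mul_one, zero_mul, mul_zero]
      rw [Finset.sum_ite_eq' Finset.univ j0]
      simp [mul_assoc, inv_mul_cancel₀ hj0]
    have hrange : LinearMap.range (dotL n p) = ⊤ := LinearMap.range_eq_top.mpr hsurj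
    have hker : Module.finrank F (LinearMap.ker (dotL n p)) = n - 1 := by
      have h := LinearMap.finrank_range_add_finrank_ker (dotL n p)
      rw [hrange] at h
      simp [finrank_top, Module.finrank_pi, Module.finrank_self] at h
      omega
    have hcardker : Fintype.card (LinearMap.ker (dotL n p)) = Fintype.card F ^ (n - 1) := by
      rw [Module.card_eq_pow_finrank (K := F) (V := LinearMap.ker (dotL n p)), hker]
    have heq : Fintype.card {s : Fin n → F // (∑ j, s j * p j) ≠ 0}
        = Fintype.card (Fin n → F) - Fintype.card {s : Fin n → F // (∑ j, s j * p j) = 0} :=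
      Fintype.card_subtype_compl _
    have heq2 : Fintype.card {s : Fin n → F // (∑ j, s j * p j) = 0}
        = Fintype.card (LinearMap.ker (dotL n p)) := by
      apply Fintype.card_congr
      exact Equiv.subtypeEquivRight fun s => by simp [LinearMap.mem_ker]
    rw [heq, heq2, hcardker]
    simp [Fintype.card_fun]

lemma map_diag_submatrix {R S : Type*} [CommRing R] [CommRing S] (f : R →+* S)
    {T : Type*} [Fintype T] [DecidableEq T] {a : ℕ} (e : Fin a ≃ T) (w : T → R) :
    ((Matrix.diagonal w).submatrix e e).map f
      = (Matrix.diagonal fun t => f (w t)).submatrix e e := by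
  rw [← Matrix.submatrix_map, Matrix.diagonal_map (map_zero f)]

lemma fintype_card_eq_nat_card {α : Type*} (inst : Fintype α) :
    @Fintype.card α inst = Nat.card α :=
  (@Nat.card_eq_fintype_card α inst).symm

lemma card_pi_subtype {α : Type*} [Fintype α] {β : Type*} (P : α → β → Prop) :
    Nat.card {f : α → β // ∀ i, P i (f i)} = ∏ i, Nat.card {x : β // P i x} := by
  rw [Nat.card_congr (Equiv.subtypePiEquivPi (p := P)), Nat.card_pi]

end Statement12Aux

set_option maxHeartbeats 1000000 in
/-- For every finite field, `d ≥ 1` and `ε > 0`, there is a nonzero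
matrix of multilinear forms with `MaxR(M) < ((1 − 1/q)^d + ε) · CR(M)`. -/
theorem statement_12 (F : Type*) [Field F] [Fintype F] (d : ℕ) (hd : 1 ≤ d)
    (ε : ℝ) (hε : 0 < ε) :
    ∃ (n a b : ℕ), 1 ≤ n ∧
      ∃ M : Matrix (Fin a) (Fin b) (MvPolynomial (Fin d × Fin n) F),
        (∀ i j, IsMultilinear (M i j)) ∧ M ≠ 0 ∧
        (MaxR M : ℝ) < ((1 - 1 / (Fintype.card F : ℝ)) ^ d + ε) * (CR M : ℝ) := by
    classical
  have hq2 : 2 ≤ Fintype.card F := Fintype.one_lt_card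
  set q : ℕ := Fintype.card F with hqdef
  have hqR : (1:ℝ) < (q:ℝ) := by exact_mod_cast hq2
  have hq0 : (0:ℝ) < (q:ℝ) := lt_trans one_pos hqR
  set c : ℝ := (1 - 1/(q:ℝ))^d with hcdef
  have h1q : 0 < 1 - 1/(q:ℝ) := by
    rw [sub_pos, div_lt_one hq0]; exact hqR
  have hcpos : 0 < c := pow_pos h1q d
  have hcε : 0 < c + ε := by linarith
  obtain ⟨n0, hn0⟩ := pow_unbounded_of_one_lt (R := ℝ) ((d:ℝ) * (c + ε) / ε) hqR
  set n := n0 + 1 with hndef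
  have hn1 : 1 ≤ n := Nat.le_add_left 1 n0
  set Q : ℝ := (q:ℝ)^n with hQdef
  have hQ0 : 0 < Q := pow_pos hq0 n
  have hQbig : (d:ℝ) * (c+ε)/ε < Q := by
    refine lt_of_lt_of_le hn0 ?_
    rw [hQdef]
    exact pow_le_pow_right₀ (le_of_lt hqR) (Nat.le_succ n0)
  have hQ2 : (2:ℝ) ≤ Q := by
    rw [hQdef]
    calc (2:ℝ) ≤ (q:ℝ) := by exact_mod_cast hq2
      _ = (q:ℝ)^1 := (pow_one _).symm
      _ ≤ (q:ℝ)^n := pow_le_pow_right₀ (le_of_lt hqR) hn1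
  set T := (Fin d → Fin n → F) with hTdef
  set a := Fintype.card T with hadef
  refine ⟨n, a, a, hn1, ?_⟩
  set e : Fin a ≃ T := (Fintype.equivFin T).symm with hedef
  set M : Matrix (Fin a) (Fin a) (MvPolynomial (Fin d × Fin n) F) :=
    (Matrix.diagonal fun t : T => auxPoly d n t).submatrix e e with hMdef
  have hw0 : ∀ t : T, auxPoly d n t ≠ 0 ↔ ∀ i, t i ≠ 0 := by
    intro t
    constructor
    · intro h i
      by_contra hti
      exact h (auxPoly_eq_zero d n t i hti)
    · exact auxPoly_ne_zero d n t
  refine ⟨M, ?_, ?_, ?_⟩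
  · intro i j
    rw [hMdef, Matrix.submatrix_apply]
    by_cases h : e i = e j
    · rw [h, Matrix.diagonal_apply_eq]
      exact auxPoly_multilinear d n (e j)
    · rw [Matrix.diagonal_apply_ne _ h]
      intro m hm
      rw [MvPolynomial.support_zero] at hm
      exact absurd hm (Finset.notMem_empty m)
  · intro h0
    set t1 : T := fun _ _ => (1:F) with ht1def
    have ht1 : ∀ i : Fin d, t1 i ≠ 0 := by
      intro i hcon
      have := congrFun hcon ⟨0, hn1⟩
      simp [ht1def] at this
    have hzero : M (e.symm t1) (e.symm t1) = 0 := by rw [h0]; rfl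
    rw [hMdef, Matrix.submatrix_apply, Equiv.apply_symm_apply,
      Matrix.diagonal_apply_eq] at hzero
    exact ((hw0 t1).mpr ht1) hzero
  · -- the quantitative inequality
    have hinj : Function.Injective (algebraMap (MvPolynomial (Fin d × Fin n) F)
        (FractionRing (MvPolynomial (Fin d × Fin n) F))) :=
      IsFractionRing.injective _ _
    have hcard1 : Nat.card {s : Fin n → F // s ≠ 0} = q^n - 1 := by
      rw [Nat.card_eq_fintype_card]
      have h1 : Fintype.card {s : Fin n → F // s ≠ 0}
          = Fintype.card (Fin n → F) - Fintype.card {s : Fin n → F // s = 0} :=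
        Fintype.card_subtype_compl _
      rw [h1, Fintype.card_subtype_eq (0 : Fin n → F)]
      simp [Fintype.card_fun, hqdef]
    haveI : DecidableEq (FractionRing (MvPolynomial (Fin d × Fin n) F)) :=
      Classical.decEq _
    haveI : DecidablePred (fun t : T => (algebraMap (MvPolynomial (Fin d × Fin n) F)
        (FractionRing (MvPolynomial (Fin d × Fin n) F))) (auxPoly d n t) ≠ 0) :=
      Classical.decPred _
    have hCR : CR M = (q^n - 1)^d := by
      unfold CR
      rw [hMdef, map_diag_submatrix, Matrix.rank_submatrix, Matrix.rank_diagonal]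
      have hiff : ∀ t : T, (algebraMap (MvPolynomial (Fin d × Fin n) F)
          (FractionRing (MvPolynomial (Fin d × Fin n) F)) (auxPoly d n t) ≠ 0)
          ↔ ∀ i, t i ≠ 0 := by
        intro t
        rw [map_ne_zero_iff _ hinj]
        exact hw0 t
      rw [fintype_card_eq_nat_card, Nat.card_congr (Equiv.subtypeEquivRight hiff),
        card_pi_subtype (fun _ (s : Fin n → F) => s ≠ 0)]
      simp [hcard1, hqdef]
    have hMax : MaxR M ≤ (q^n - q^(n-1))^d := by
      refine ciSup_le fun p => ?_
      have hstep : (evalMat M p).rank = Fintype.card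
          {t : T // (eval fun v : Fin d × Fin n => p v.1 v.2) (auxPoly d n t) ≠ 0} := by
        unfold evalMat
        rw [hMdef, ← Matrix.submatrix_map,
          Matrix.diagonal_map (map_zero _), Matrix.rank_submatrix, Matrix.rank_diagonal]
      rw [hstep]
      have hiff : ∀ t : T, ((eval fun v : Fin d × Fin n => p v.1 v.2) (auxPoly d n t) ≠ 0)
          ↔ ∀ i, (∑ j, t i j * p i j) ≠ 0 := by
        intro t
        rw [auxPoly_eval, Finset.prod_ne_zero_iff]
        simp
      rw [fintype_card_eq_nat_card, Nat.card_congr (Equiv.subtypeEquivRight hiff),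
        card_pi_subtype (fun i (s : Fin n → F) => (∑ j, s j * p i j) ≠ 0)]
      calc ∏ i : Fin d, Nat.card {s : Fin n → F // (∑ j, s j * p i j) ≠ 0}
          ≤ ∏ _i : Fin d, (q^n - q^(n-1)) :=
            Finset.prod_le_prod' fun i _ => card_dot n hn1 (p i)
        _ = (q^n - q^(n-1))^d := by simp
    -- numerical part
    have hqle : q^(n-1) ≤ q^n :=
      Nat.pow_le_pow_right (by omega) (Nat.sub_le n 1)
    have h1le : 1 ≤ q^n := Nat.one_le_pow _ _ (by omega)
    have hKcast : ((q^n - q^(n-1) : ℕ) : ℝ) = (1 - 1/(q:ℝ)) * Q := by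
      have hqQ : (q:ℝ)^n = (q:ℝ)^(n-1) * q := by
        rw [← pow_succ, Nat.sub_add_cancel hn1]
      rw [Nat.cast_sub hqle, hQdef]
      push_cast
      rw [sub_mul, one_mul]
      congr 1
      rw [hqQ]
      field_simp
    have hLcast : ((q^n - 1 : ℕ) : ℝ) = Q - 1 := by
      rw [Nat.cast_sub h1le, hQdef]
      push_cast
      ring
    have hnum : c * Q^d < (c + ε) * (Q - 1)^d := by
      have hber : 1 - (d:ℝ)/Q ≤ (1 - 1/Q)^d := by
        have hinvQ : 0 < 1/Q := by positivity
        have hinvQ1 : 1/Q ≤ 1 := by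
          rw [div_le_one hQ0]; linarith
        have h := one_add_mul_le_pow (a := -(1/Q)) (by linarith) d
        have e1 : 1 - (d:ℝ)/Q = 1 + (d:ℝ) * -(1/Q) := by ring
        have e2 : (1:ℝ) - 1/Q = 1 + -(1/Q) := by ring
        rw [e1, e2]
        exact h
      have hd2 : (d:ℝ)*(c+ε) < ε * Q := by
        have := (div_lt_iff₀ hε).mp hQbig
        linarith
      have hstep : c < (c+ε) * (1 - (d:ℝ)/Q) := by
        have h3 : (c+ε) * ((d:ℝ)/Q) < ε := by
          rw [← mul_div_assoc, div_lt_iff₀ hQ0]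
          nlinarith
        nlinarith
      have hfac : (Q - 1)^d = (1 - 1/Q)^d * Q^d := by
        rw [← mul_pow]
        congr 1
        field_simp
      calc c * Q^d < ((c+ε) * (1 - (d:ℝ)/Q)) * Q^d :=
            mul_lt_mul_of_pos_right hstep (pow_pos hQ0 d)
        _ ≤ ((c+ε) * (1 - 1/Q)^d) * Q^d := by
            refine mul_le_mul_of_nonneg_right ?_ (le_of_lt (pow_pos hQ0 d))
            exact mul_le_mul_of_nonneg_left hber (le_of_lt hcε)
        _ = (c+ε) * (Q-1)^d := by rw [hfac]; ring
    calc (MaxR M : ℝ) ≤ (((q^n - q^(n-1))^d : ℕ) : ℝ) := by exact_mod_cast hMax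
      _ = ((1 - 1/(q:ℝ)) * Q)^d := by rw [Nat.cast_pow, hKcast]
      _ = c * Q^d := by rw [mul_pow, ← hcdef]
      _ < (c + ε) * (Q - 1)^d := hnum
      _ = (c + ε) * (((q^n - 1)^d : ℕ) : ℝ) := by rw [Nat.cast_pow, hLcast]
      _ = (c + ε) * (CR M : ℝ) := by rw [hCR]
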